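/- As ε ↓ 0, the functions u^ε(z₁,z₂) = -2(Re z₂)²/log(|z₁|² + ε) - (|z₁|² + ε)(log(|z₁|² + ε) - 2) converge decreasingly (pointwise monotone in ε) and uniformly on every compact subset of 𝔻 × ℂ to u(z₁,z₂) = -(Re z₂)²/log|z₁| - 2|z₁|²(log|z₁| - 1) (with u(0,z₂) = 0). -/

import Mathlib

/-- `u(z₁,z₂) = -(Re z₂)²/log|z₁| - 2|z₁|²(log|z₁| - 1)`, with `u(0,z₂) = 0`. -/
noncomputable def u (z : ℂ × ℂ) : ℝ :=
  if z.1 = 0 then 0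
  else -(z.2.re) ^ 2 / Real.log (‖z.1‖)
    - 2 * (‖z.1‖) ^ 2 * (Real.log (‖z.1‖) - 1)

/-- `u^ε(z₁,z₂) = -2(Re z₂)²/log(|z₁|²+ε) - (|z₁|²+ε)(log(|z₁|²+ε)-2)`. -/
noncomputable def uE (ε : ℝ) (z : ℂ × ℂ) : ℝ :=
  -2 * (z.2.re) ^ 2 / Real.log ((‖z.1‖) ^ 2 + ε)
    - ((‖z.1‖) ^ 2 + ε) * (Real.log ((‖z.1‖) ^ 2 + ε) - 2)

/-- The one-variable profile `f a t = -2a/log t - t(log t - 2)`. -/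
noncomputable def fAux (a t : ℝ) : ℝ :=
  -2 * a / Real.log t - t * (Real.log t - 2)

lemma log_ne_zero_of_mem_Ioo {t : ℝ} (ht : t ∈ Set.Ioo (-1 : ℝ) 1) (h0 : t ≠ 0) :
    Real.log t ≠ 0 := by
  rw [← Real.log_abs]
  have h1 : 0 < |t| := abs_pos.2 h0
  have h2 : |t| < 1 := abs_lt.2 ⟨ht.1, ht.2⟩
  exact ne_of_lt (Real.log_neg h1 h2)

lemma fAux_hasDerivAt {a t : ℝ} (ht : t ∈ Set.Ioo (0 : ℝ) 1) :
    HasDerivAt (fAux a) (2 * a * t⁻¹ / (Real.log t) ^ 2 - Real.log t + 1) t := by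
  have ht0 : t ≠ 0 := ne_of_gt ht.1
  have hL : Real.log t ≠ 0 :=
    log_ne_zero_of_mem_Ioo ⟨lt_trans (by norm_num) ht.1, ht.2⟩ ht0
  have h1 : HasDerivAt Real.log t⁻¹ t := Real.hasDerivAt_log ht0
  have h2 : HasDerivAt (fun s => (Real.log s)⁻¹) (-t⁻¹ / (Real.log t) ^ 2) t := h1.inv hL
  have h3 : HasDerivAt (fun s => -2 * a * (Real.log s)⁻¹)
      (-2 * a * (-t⁻¹ / (Real.log t) ^ 2)) t := h2.const_mul _
  have h4 : HasDerivAt (fun s => s * (Real.log s - 2))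
      (1 * (Real.log t - 2) + t * t⁻¹) t := (hasDerivAt_id t).mul (h1.sub_const 2)
  have h5 : HasDerivAt (fun s => -2 * a * (Real.log s)⁻¹ - s * (Real.log s - 2)) _ t := h3.sub h4
  have hfun : (fun s => -2 * a * (Real.log s)⁻¹ - s * (Real.log s - 2)) = fAux a := by
    funext s
    simp only [fAux, div_eq_mul_inv]
  rw [hfun] at h5
  convert h5 using 1
  rw [mul_inv_cancel₀ ht0]
  field_simp
  ring

lemma fAux_strictMonoOn {a : ℝ} (ha : 0 ≤ a) : StrictMonoOn (fAux a) (Set.Ioo 0 1) := by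
  apply strictMonoOn_of_deriv_pos (convex_Ioo 0 1)
  · intro t ht
    exact (fAux_hasDerivAt ht).continuousAt.continuousWithinAt
  · intro t ht
    rw [interior_Ioo] at ht
    rw [(fAux_hasDerivAt ht).deriv]
    have hL : Real.log t < 0 := Real.log_neg ht.1 ht.2
    have ht0 : (0:ℝ) < t := ht.1
    have hL' : Real.log t ≠ 0 := ne_of_lt hL
    have h1 : 0 ≤ 2 * a * t⁻¹ / (Real.log t) ^ 2 := by positivity
    nlinarith

lemma u_eq_uE_zero : u = uE 0 := by
  funext z
  simp only [u, uE, add_zero]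
  by_cases h : z.1 = 0
  · simp [h]
  · have habs : (0 : ℝ) < ‖z.1‖ := by
      simpa using (norm_pos_iff.mpr h)
    rw [if_neg h]
    have hlog : Real.log ((‖z.1‖) ^ 2) = 2 * Real.log (‖z.1‖) := by
      rw [Real.log_pow]; push_cast; ring
    rw [hlog]
    rcases eq_or_ne (Real.log (‖z.1‖)) 0 with hL | hL
    · rw [hL]; norm_num; ring
    · field_simp

lemma tuo_mono_left {ι α β : Type*} [UniformSpace β] {F : ι → α → β} {f : α → β}
    {p p' : Filter ι} {s : Set α} (h : TendstoUniformlyOn F f p' s) (hle : p ≤ p') :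
    TendstoUniformlyOn F f p s :=
  fun v hv => (h v hv).filter_mono hle

lemma continuousOn_inv_log : ContinuousOn (fun t : ℝ => (Real.log t)⁻¹) (Set.Ioo (-1 : ℝ) 1) := by
  intro t ht
  apply ContinuousAt.continuousWithinAt
  by_cases h0 : t = 0
  · subst h0
    have key : Filter.Tendsto (fun t : ℝ => (Real.log t)⁻¹) (nhds 0) (nhds 0) := by
      have h1 : Filter.Tendsto (fun t : ℝ => (Real.log t)⁻¹)
          (nhdsWithin (0:ℝ) {(0:ℝ)}ᶜ) (nhds 0) := by
        have hneg : Filter.Tendsto (fun t : ℝ => -Real.log t)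
            (nhdsWithin (0:ℝ) {(0:ℝ)}ᶜ) Filter.atTop :=
          Filter.tendsto_neg_atBot_atTop.comp Real.tendsto_log_nhdsNE_zero
        have h := (tendsto_inv_atTop_zero.comp hneg).neg
        have heq : (fun t : ℝ => -(-Real.log t)⁻¹) = fun t : ℝ => (Real.log t)⁻¹ := by
          funext t; rw [inv_neg, neg_neg]
        simpa [heq, Function.comp] using h
      have h2 : Filter.Tendsto (fun t : ℝ => (Real.log t)⁻¹) (pure (0:ℝ)) (nhds 0) := by
        have h := Filter.tendsto_pure_pure (fun t : ℝ => (Real.log t)⁻¹) 0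
        simpa using h.mono_right (pure_le_nhds _)
      have := h1.sup h2
      rwa [nhdsNE_sup_pure] at this
    simpa [ContinuousAt] using key
  · exact ((Real.continuousAt_log h0).inv₀ (log_ne_zero_of_mem_Ioo ht h0))

/-- As `ε ↓ 0`, the `u^ε` converge decreasingly (pointwise monotone in `ε`) and uniformly
on every compact subset of `𝔻 × ℂ` to `u`. -/
theorem uE_decreasing_and_tendstoUniformlyOn :
    (∀ ε ε' : ℝ, 0 < ε' → ε' < ε → ε < 1 → ∀ z : ℂ × ℂ,
      ‖z.1‖ < 1 - ε → uE ε' z ≤ uE ε z) ∧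
    (∀ K : Set (ℂ × ℂ), IsCompact K → K ⊆ {p : ℂ × ℂ | ‖p.1‖ < 1} →
      TendstoUniformlyOn (fun ε z => uE ε z) u (nhdsWithin 0 (Set.Ioi 0)) K) := by
  constructor
  · -- monotonicity
    intro ε ε' hε' hlt hε1 z hz
    set a := z.2.re ^ 2 with ha_def
    have ha : 0 ≤ a := sq_nonneg _
    set x := (‖z.1‖) ^ 2 with hx_def
    have hx0 : 0 ≤ x := sq_nonneg _
    have hε0 : 0 < ε := lt_trans hε' hlt
    have hεlt : ε < 1 := hε1
    have hxlt : x < (1 - ε) ^ 2 := by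
      have h1 : 0 ≤ ‖z.1‖ := norm_nonneg _
      exact pow_lt_pow_left₀ hz h1 (by norm_num)
    have ht1 : x + ε < 1 := by nlinarith
    have hmem' : x + ε' ∈ Set.Ioo (0 : ℝ) 1 := ⟨by linarith, by linarith⟩
    have hmem : x + ε ∈ Set.Ioo (0 : ℝ) 1 := ⟨by linarith, ht1⟩
    have := ((fAux_strictMonoOn ha).monotoneOn) hmem' hmem (by linarith)
    simpa only [fAux, uE] using this
  · -- uniform convergence
    intro K hK hKsub
    rw [u_eq_uE_zero]
    rcases K.eq_empty_or_nonempty with rfl | hne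
    · exact tendstoUniformlyOn_empty
    obtain ⟨z₀, hz₀K, hmax⟩ := hK.exists_isMaxOn hne
      (continuous_norm.comp continuous_fst).continuousOn
    set r := ‖z₀.1‖ with hr_def
    have hr0 : 0 ≤ r := norm_nonneg _
    have hr1 : r < 1 := hKsub hz₀K
    set δ : ℝ := (1 - r ^ 2) / 2 with hδ_def
    have hr2 : r ^ 2 < 1 := by nlinarith
    have hδ0 : 0 < δ := by simp only [hδ_def]; linarith
    set D : Set (ℝ × (ℂ × ℂ)) := Set.Icc 0 δ ×ˢ K with hD_def
    have hDc : IsCompact D := isCompact_Icc.prod hK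
    -- the map to the (t, a) variables
    have htmap : Continuous (fun p : ℝ × (ℂ × ℂ) => (‖p.2.1‖) ^ 2 + p.1) :=
      ((continuous_norm.comp continuous_snd.fst).pow 2).add continuous_fst
    have hmapsto : ∀ p ∈ D, (‖p.2.1‖) ^ 2 + p.1 ∈ Set.Ioo (-1 : ℝ) 1 := by
      rintro ⟨e, w⟩ ⟨he, hw⟩
      have h1 : 0 ≤ e := he.1
      have h2 : e ≤ δ := he.2
      have h3 : ‖w.1‖ ≤ r := hmax hw
      have h4 : (‖w.1‖) ^ 2 ≤ r ^ 2 :=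
        pow_le_pow_left₀ (norm_nonneg _) h3 2
      have h5 : 0 ≤ (‖w.1‖) ^ 2 := sq_nonneg _
      constructor
      · simp only; linarith
      · simp only [hδ_def] at h2 ⊢; linarith
    have hcont : ContinuousOn (Function.uncurry uE) D := by
      have hterm1 : ContinuousOn
          (fun p : ℝ × (ℂ × ℂ) =>
            (-2 * p.2.2.re ^ 2) * (Real.log ((‖p.2.1‖) ^ 2 + p.1))⁻¹) D := by
        apply ContinuousOn.mul
        · exact (continuous_const.mul ((Complex.continuous_re.comp continuous_snd.snd).pow 2)).continuousOn
        · exact continuousOn_inv_log.comp htmap.continuousOn hmapsto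
      have hterm2 : ContinuousOn
          (fun p : ℝ × (ℂ × ℂ) =>
            ((‖p.2.1‖) ^ 2 + p.1) * Real.log ((‖p.2.1‖) ^ 2 + p.1)) D :=
        Real.continuous_mul_log.comp_continuousOn htmap.continuousOn
      have hterm3 : ContinuousOn
          (fun p : ℝ × (ℂ × ℂ) => 2 * ((‖p.2.1‖) ^ 2 + p.1)) D :=
        (continuous_const.mul htmap).continuousOn
      have hbig := (hterm1.sub hterm2).add hterm3
      apply hbig.congr
      intro p _
      simp only [Function.uncurry, uE, div_eq_mul_inv, Pi.add_apply, Pi.sub_apply]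
      ring
    have hucont : UniformContinuousOn (Function.uncurry uE) D :=
      hDc.uniformContinuousOn_of_continuous hcont
    have h0mem : (0 : ℝ) ∈ Set.Icc (0 : ℝ) δ := ⟨le_refl _, le_of_lt hδ0⟩
    have htuo : TendstoUniformlyOn uE (uE 0) (nhdsWithin 0 (Set.Icc 0 δ)) K :=
      UniformContinuousOn.tendstoUniformlyOn hucont h0mem
    have hle : nhdsWithin (0:ℝ) (Set.Ioi 0) ≤ nhdsWithin 0 (Set.Icc 0 δ) := by
      rw [nhdsWithin, nhdsWithin]
      apply le_inf inf_le_left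
      rw [Filter.le_principal_iff, ← nhdsWithin]
      have : Set.Ioo (0:ℝ) δ ∈ nhdsWithin (0:ℝ) (Set.Ioi 0) :=
        Ioo_mem_nhdsGT_of_mem ⟨le_refl _, hδ0⟩
      exact Filter.mem_of_superset this (fun x hx => ⟨le_of_lt hx.1, le_of_lt hx.2⟩)
    exact tuo_mono_left htuo hle
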